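/- arXiv:1701.07986 — 3 statements merged into one kernel-verified Lean document; each statement's English description precedes it below -/
import Mathlib

section
/- Let v₁,…,v_N and w₁,…,w_N be two N-tuples of points in ℝⁿ. If for every y > 0 the μ-measure of S_y(v₁,…,v_N) = ⋂_{i=1}^N {x ∈ ℝⁿ : 2⟨x,v_i⟩ − ‖v_i‖² ≤ ln y} is at most the μ-measure of S_y(w₁,…,w_N), then P(v₁,…,v_N) ≥ P(w₁,…,w_N). -/
open MeasureTheory Real
open scoped InnerProductSpace ENNReal

/-- The functional `P(v₁,…,v_N) = ∫_{ℝⁿ} max_i exp(−‖x−v_i‖²) dx`. -/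
noncomputable def Pfun {n : ℕ} {ι : Type} [Fintype ι]
    (v : ι → EuclideanSpace ℝ (Fin n)) : ℝ :=
  ∫ x : EuclideanSpace ℝ (Fin n), ⨆ i, Real.exp (-‖x - v i‖ ^ 2)

/-- The measure on `ℝⁿ` with density `e^{−‖x‖²}` with respect to Lebesgue measure. -/
noncomputable def muGauss (n : ℕ) : Measure (EuclideanSpace ℝ (Fin n)) :=
  volume.withDensity fun x => ENNReal.ofReal (Real.exp (-‖x‖ ^ 2))

section Aux

variable {n N : ℕ}

/-- A finite sup of continuous real functions is continuous. -/
lemma auxContSup {X : Type*} [TopologicalSpace X] {ι : Type*} [Fintype ι] [Nonempty ι]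
    (f : ι → X → ℝ) (hf : ∀ i, Continuous (f i)) :
    Continuous fun x => ⨆ i, f i x := by
  have hx : ∀ x, (⨆ i, f i x) = Finset.univ.sup' Finset.univ_nonempty (f · x) := fun x =>
    (Finset.sup'_univ_eq_ciSup _).symm
  simp only [hx]
  rw [continuous_iff_continuousAt]
  intro x
  exact Filter.Tendsto.finset_sup'_nhds_apply _ fun i _ => (hf i).continuousAt

/-- Integrability of a translated Gaussian. -/
lemma auxGaussInt (c : EuclideanSpace ℝ (Fin n)) :
    Integrable (fun x : EuclideanSpace ℝ (Fin n) => rexp (-‖x - c‖ ^ 2)) := by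
  have h1 : Integrable (fun x : EuclideanSpace ℝ (Fin n) =>
      Complex.exp (-(1 : ℂ) * (‖x‖ : ℂ) ^ 2 + (0 : ℂ) * ⟪(0 : EuclideanSpace ℝ (Fin n)), x⟫_ℝ)) :=
    GaussianFourier.integrable_cexp_neg_mul_sq_norm_add (by norm_num) 0 0
  have h0 : Integrable (fun x : EuclideanSpace ℝ (Fin n) => rexp (-‖x‖ ^ 2)) := by
    refine h1.norm.congr ?_
    filter_upwards with x
    rw [Complex.norm_exp]
    simp only [neg_mul, one_mul, Complex.add_re, Complex.neg_re, Complex.mul_re,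
      Complex.zero_re, Complex.zero_im, zero_mul, sub_zero, add_zero]
    rw [← Complex.ofReal_pow, Complex.ofReal_re]
  have hmp : MeasurePreserving (fun x : EuclideanSpace ℝ (Fin n) => x - c) volume volume :=
    measurePreserving_sub_right volume c
  exact (hmp.integrable_comp_emb (MeasurableEquiv.subRight c).measurableEmbedding).mpr h0

lemma auxOfRealLintegralLtTop (c : EuclideanSpace ℝ (Fin n)) :
    ∫⁻ x : EuclideanSpace ℝ (Fin n), ENNReal.ofReal (rexp (-‖x - c‖ ^ 2)) < ⊤ := by
  have := (auxGaussInt c).hasFiniteIntegral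
  rw [HasFiniteIntegral] at this
  refine lt_of_le_of_lt (lintegral_mono fun x => ?_) this
  rw [← Real.enorm_eq_ofReal (exp_nonneg _)]

lemma auxContG (hN : 0 < N) (u : Fin N → EuclideanSpace ℝ (Fin n)) :
    Continuous fun x : EuclideanSpace ℝ (Fin n) =>
      ⨆ i, rexp (2 * ⟪x, u i⟫_ℝ - ‖u i‖ ^ 2) := by
  haveI : Nonempty (Fin N) := ⟨⟨0, hN⟩⟩
  refine auxContSup _ fun i => ?_
  exact Real.continuous_exp.comp
    (((continuous_const.mul (continuous_id.inner continuous_const)).sub continuous_const))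

lemma auxContSupGauss (hN : 0 < N) (u : Fin N → EuclideanSpace ℝ (Fin n)) :
    Continuous fun x : EuclideanSpace ℝ (Fin n) => ⨆ i, rexp (-‖x - u i‖ ^ 2) := by
  haveI : Nonempty (Fin N) := ⟨⟨0, hN⟩⟩
  refine auxContSup _ fun i => ?_
  exact Real.continuous_exp.comp ((((continuous_id.sub continuous_const).norm.pow 2)).neg)

/-- Pointwise factorization of the Gaussian sup. -/
lemma auxPointwise (hN : 0 < N) (u : Fin N → EuclideanSpace ℝ (Fin n))
    (x : EuclideanSpace ℝ (Fin n)) :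
    (⨆ i, rexp (-‖x - u i‖ ^ 2)) =
      rexp (-‖x‖ ^ 2) * ⨆ i, rexp (2 * ⟪x, u i⟫_ℝ - ‖u i‖ ^ 2) := by
  haveI : Nonempty (Fin N) := ⟨⟨0, hN⟩⟩
  have h1 : ∀ i, rexp (-‖x - u i‖ ^ 2)
      = rexp (-‖x‖ ^ 2) * rexp (2 * ⟪x, u i⟫_ℝ - ‖u i‖ ^ 2) := by
    intro i
    rw [← Real.exp_add]
    congr 1
    rw [norm_sub_sq_real]
    ring
  simp only [h1]
  rw [← Finset.sup'_univ_eq_ciSup, ← Finset.sup'_univ_eq_ciSup,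
    Finset.comp_sup'_eq_sup'_comp (γ := ℝ) Finset.univ_nonempty
      (fun r => rexp (-‖x‖ ^ 2) * r)
      (fun a b => by
        exact mul_max_of_nonneg a b (exp_nonneg _))]
  rfl

lemma auxFiniteGauss : IsFiniteMeasure (muGauss n) := by
  constructor
  rw [muGauss, withDensity_apply _ MeasurableSet.univ, setLIntegral_univ]
  have := auxOfRealLintegralLtTop (0 : EuclideanSpace ℝ (Fin n))
  simpa using this

/-- The main lintegral identity. -/
lemma auxKey (hN : 0 < N) (u : Fin N → EuclideanSpace ℝ (Fin n)) :
    ∫⁻ x : EuclideanSpace ℝ (Fin n), ENNReal.ofReal (⨆ i, rexp (-‖x - u i‖ ^ 2)) =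
      ∫⁻ y in Set.Ioi (0 : ℝ),
        (muGauss n Set.univ -
          muGauss n (⋂ i, {x : EuclideanSpace ℝ (Fin n) |
            2 * ⟪x, u i⟫_ℝ - ‖u i‖ ^ 2 ≤ Real.log y})) := by
  haveI : Nonempty (Fin N) := ⟨⟨0, hN⟩⟩
  haveI : IsFiniteMeasure (muGauss n) := auxFiniteGauss
  set G : EuclideanSpace ℝ (Fin n) → ℝ :=
    fun x => ⨆ i, rexp (2 * ⟪x, u i⟫_ℝ - ‖u i‖ ^ 2) with hGdef
  have hGcont : Continuous G := auxContG hN u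
  have hbdd : ∀ x, BddAbove (Set.range fun i => rexp (2 * ⟪x, u i⟫_ℝ - ‖u i‖ ^ 2)) :=
    fun x => Set.Finite.bddAbove (Set.finite_range _)
  -- step 1 : rewrite as an integral against muGauss
  have step1 : ∫⁻ x : EuclideanSpace ℝ (Fin n),
      ENNReal.ofReal (⨆ i, rexp (-‖x - u i‖ ^ 2)) =
      ∫⁻ x, ENNReal.ofReal (G x) ∂(muGauss n) := by
    have hd : Measurable fun x : EuclideanSpace ℝ (Fin n) => ENNReal.ofReal (rexp (-‖x‖ ^ 2)) := by
      have hc : Continuous fun x : EuclideanSpace ℝ (Fin n) => rexp (-‖x‖ ^ 2) := by continuity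
      exact hc.measurable.ennreal_ofReal
    rw [muGauss, lintegral_withDensity_eq_lintegral_mul _ hd hGcont.measurable.ennreal_ofReal]
    refine lintegral_congr fun x => ?_
    simp only [Pi.mul_apply]
    rw [auxPointwise hN u x, ENNReal.ofReal_mul (exp_nonneg _)]
  rw [step1]
  -- step 2 : layer cake
  rw [lintegral_eq_lintegral_meas_lt (muGauss n)
    (Filter.Eventually.of_forall fun x =>
      le_trans (exp_nonneg _) (le_ciSup (hbdd x) ⟨0, hN⟩))
    hGcont.measurable.aemeasurable]
  -- step 3 : rewrite the superlevel sets
  refine setLIntegral_congr_fun measurableSet_Ioi (fun y hy => ?_)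
  have hset : {x : EuclideanSpace ℝ (Fin n) | y < G x} =
      (⋂ i, {x : EuclideanSpace ℝ (Fin n) |
        2 * ⟪x, u i⟫_ℝ - ‖u i‖ ^ 2 ≤ Real.log y})ᶜ := by
    ext x
    simp only [Set.mem_setOf_eq, Set.mem_compl_iff, Set.mem_iInter, not_forall]
    rw [← not_le, hGdef]
    constructor
    · intro hlt
      by_contra hc
      push_neg at hc
      exact hlt (ciSup_le fun i => (Real.le_log_iff_exp_le hy).mp (hc i))
    · rintro ⟨i, hi⟩ hle
      exact hi ((Real.le_log_iff_exp_le hy).mpr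
        (le_trans (le_ciSup (hbdd x) i) hle))
  rw [hset, measure_compl ?_ (measure_ne_top _ _)]
  · refine MeasurableSet.iInter fun i => ?_
    exact (isClosed_le ((continuous_const.mul (continuous_id.inner continuous_const)).sub
      continuous_const) continuous_const).measurableSet

end Aux

theorem stmt2 (n N : ℕ) (hN : 0 < N) (v w : Fin N → EuclideanSpace ℝ (Fin n))
    (h : ∀ y : ℝ, 0 < y →
      muGauss n (⋂ i, {x : EuclideanSpace ℝ (Fin n) |
          2 * ⟪x, v i⟫_ℝ - ‖v i‖ ^ 2 ≤ Real.log y}) ≤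
      muGauss n (⋂ i, {x : EuclideanSpace ℝ (Fin n) |
          2 * ⟪x, w i⟫_ℝ - ‖w i‖ ^ 2 ≤ Real.log y})) :
    Pfun w ≤ Pfun v := by
  haveI : Nonempty (Fin N) := ⟨⟨0, hN⟩⟩
  have hbdd : ∀ (u : Fin N → EuclideanSpace ℝ (Fin n)) x,
      BddAbove (Set.range fun i => rexp (-‖x - u i‖ ^ 2)) :=
    fun u x => Set.Finite.bddAbove (Set.finite_range _)
  -- rewrite Pfun as toReal of a lintegral
  have hPfun : ∀ u : Fin N → EuclideanSpace ℝ (Fin n),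
      Pfun u = (∫⁻ x : EuclideanSpace ℝ (Fin n),
        ENNReal.ofReal (⨆ i, rexp (-‖x - u i‖ ^ 2))).toReal := by
    intro u
    rw [Pfun, integral_eq_lintegral_of_nonneg_ae
      (Filter.Eventually.of_forall fun x =>
        le_trans (exp_nonneg _) (le_ciSup (hbdd u x) ⟨0, hN⟩))
      (auxContSupGauss hN u).aestronglyMeasurable]
  rw [hPfun v, hPfun w]
  -- finiteness of the v-side lintegral
  have hfin : ∫⁻ x : EuclideanSpace ℝ (Fin n),
      ENNReal.ofReal (⨆ i, rexp (-‖x - v i‖ ^ 2)) ≠ ⊤ := by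
    have hle : ∫⁻ x : EuclideanSpace ℝ (Fin n),
        ENNReal.ofReal (⨆ i, rexp (-‖x - v i‖ ^ 2)) ≤
        ∑ i : Fin N, ∫⁻ x : EuclideanSpace ℝ (Fin n),
            ENNReal.ofReal (rexp (-‖x - v i‖ ^ 2)) := by
      rw [← lintegral_finset_sum _ (fun i _ => by fun_prop)]
      refine lintegral_mono fun x => ?_
      obtain ⟨j, -, hj⟩ := Finset.exists_mem_eq_sup' Finset.univ_nonempty
        (fun i => rexp (-‖x - v i‖ ^ 2))
      rw [← Finset.sup'_univ_eq_ciSup, hj]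
      exact Finset.single_le_sum (f := fun i => ENNReal.ofReal (rexp (-‖x - v i‖ ^ 2)))
        (fun _ _ => zero_le) (Finset.mem_univ j)
    exact ne_top_of_le_ne_top (by
      refine (ENNReal.sum_lt_top.mpr fun i _ => ?_).ne
      exact auxOfRealLintegralLtTop (v i)) hle
  refine ENNReal.toReal_mono hfin ?_
  rw [auxKey hN v, auxKey hN w]
  refine lintegral_mono_ae ?_
  filter_upwards [ae_restrict_mem measurableSet_Ioi] with y hy
  exact tsub_le_tsub_left (h y hy) _
end

section
/- Let n ≥ 2, r > 0, let e ∈ ℝⁿ be a unit vector and let 0 < c < r. For a point u on the sphere of radius r with ⟨u,e⟩ = c and t ∈ [0,c], define u_t = t·e + √((r²−t²)/(r²−c²))·(u − c·e) (so ‖u_t‖ = r, ⟨u_t,e⟩ = t, and u_c = u). Then: (i) if u,v both lie on the sphere of radius r with ⟨u,e⟩ = ⟨v,e⟩ = c, the function t ↦ ‖u_t − v_t‖ is nonincreasing on [0,c]; (ii) if additionally w lies on the sphere of radius r with ⟨w,e⟩ ≥ c, then t ↦ ‖u_t − w‖ is nonincreasing on [0,c]. In particular, moving the points of latitude c uniformly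 down to the equator {x : ⟨x,e⟩ = 0} does not decrease any of these pairwise distances. -/
open MeasureTheory Real
open scoped InnerProductSpace ENNReal

/-- Moving a point `u` of latitude `c` on the sphere of radius `r` down to latitude `t`:
`u_t = t·e + √((r²−t²)/(r²−c²))·(u − c·e)`. -/
noncomputable def moveLat {n : ℕ} (r c : ℝ) (e u : EuclideanSpace ℝ (Fin n)) (t : ℝ) :
    EuclideanSpace ℝ (Fin n) :=
  t • e + Real.sqrt ((r ^ 2 - t ^ 2) / (r ^ 2 - c ^ 2)) • (u - c • e)

private lemma sqrt_step9 (r d t : ℝ) (ht : 0 ≤ t) (htd : t ≤ d) (hdr : d ≤ r) :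
    t * Real.sqrt (r ^ 2 - d ^ 2) ≤ d * Real.sqrt (r ^ 2 - t ^ 2) := by
  have hd : 0 ≤ d := le_trans ht htd
  have h1 : t * Real.sqrt (r ^ 2 - d ^ 2) = Real.sqrt (t ^ 2 * (r ^ 2 - d ^ 2)) := by
    rw [Real.sqrt_mul (sq_nonneg t), Real.sqrt_sq ht]
  have h2 : d * Real.sqrt (r ^ 2 - t ^ 2) = Real.sqrt (d ^ 2 * (r ^ 2 - t ^ 2)) := by
    rw [Real.sqrt_mul (sq_nonneg d), Real.sqrt_sq hd]
  rw [h1, h2]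
  apply Real.sqrt_le_sqrt
  have hsq : t ^ 2 ≤ d ^ 2 := by nlinarith
  nlinarith [mul_nonneg (sq_nonneg r) (sub_nonneg.2 hsq)]

private lemma key9 (r c d p t1 t2 : ℝ) (hr : 0 < r) (hc : 0 < c) (hcr : c < r)
    (hd : c ≤ d) (hdr : d ≤ r)
    (hp : p ≤ Real.sqrt (r ^ 2 - c ^ 2) * Real.sqrt (r ^ 2 - d ^ 2))
    (ht1 : 0 ≤ t1) (h12 : t1 ≤ t2) (ht2 : t2 ≤ c) :
    t1 * d + Real.sqrt ((r ^ 2 - t1 ^ 2) / (r ^ 2 - c ^ 2)) * p ≤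
      t2 * d + Real.sqrt ((r ^ 2 - t2 ^ 2) / (r ^ 2 - c ^ 2)) * p := by
  have hden : (0:ℝ) < r ^ 2 - c ^ 2 := by nlinarith
  have hnum1 : (0:ℝ) ≤ r ^ 2 - t1 ^ 2 := by nlinarith
  have hnum2 : (0:ℝ) ≤ r ^ 2 - t2 ^ 2 := by nlinarith
  set Q := Real.sqrt (r ^ 2 - c ^ 2) with hQdef
  set D := Real.sqrt (r ^ 2 - d ^ 2) with hDdef
  set A1 := Real.sqrt (r ^ 2 - t1 ^ 2) with hA1def
  set A2 := Real.sqrt (r ^ 2 - t2 ^ 2) with hA2def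
  have hQpos : 0 < Q := Real.sqrt_pos.2 hden
  have hDnn : 0 ≤ D := Real.sqrt_nonneg _
  have hA1nn : 0 ≤ A1 := Real.sqrt_nonneg _
  have hA2pos : 0 < A2 := Real.sqrt_pos.2 (by nlinarith)
  have hA : A2 ≤ A1 := Real.sqrt_le_sqrt (by nlinarith)
  have hs1 : Real.sqrt ((r ^ 2 - t1 ^ 2) / (r ^ 2 - c ^ 2)) = A1 / Q :=
    Real.sqrt_div hnum1 _
  have hs2 : Real.sqrt ((r ^ 2 - t2 ^ 2) / (r ^ 2 - c ^ 2)) = A2 / Q :=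
    Real.sqrt_div hnum2 _
  rw [hs1, hs2]
  have goal2 : (A1 - A2) * p ≤ (t2 - t1) * d * Q := by
    rcases le_or_gt p 0 with hp0 | hp0
    · have h1 : (A1 - A2) * p ≤ 0 := mul_nonpos_of_nonneg_of_nonpos (by linarith) hp0
      have h2 : 0 ≤ (t2 - t1) * d * Q :=
        mul_nonneg (mul_nonneg (by linarith) (by linarith)) hQpos.le
      linarith
    · have step1 : (A1 - A2) * p ≤ (A1 - A2) * (Q * D) :=
        mul_le_mul_of_nonneg_left hp (by linarith)
      have e1 : A1 ^ 2 = r ^ 2 - t1 ^ 2 := Real.sq_sqrt hnum1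
      have e2 : A2 ^ 2 = r ^ 2 - t2 ^ 2 := Real.sq_sqrt hnum2
      have hsum : (A1 - A2) * (A1 + A2) = t2 ^ 2 - t1 ^ 2 := by linear_combination e1 - e2
      have k1 : t1 * D ≤ d * A1 := sqrt_step9 r d t1 ht1 (by linarith) hdr
      have k2 : t2 * D ≤ d * A2 := sqrt_step9 r d t2 (by linarith) (by linarith) hdr
      have hApos : 0 < A1 + A2 := by linarith
      have main : (A1 - A2) * D ≤ (t2 - t1) * d := by
        apply le_of_mul_le_mul_right _ hApos
        nlinarith [mul_le_mul_of_nonneg_left k1 (sub_nonneg.2 h12),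
          mul_le_mul_of_nonneg_left k2 (sub_nonneg.2 h12),
          mul_nonneg (sub_nonneg.2 h12) hDnn]
      calc (A1 - A2) * p ≤ (A1 - A2) * (Q * D) := step1
        _ = ((A1 - A2) * D) * Q := by ring
        _ ≤ ((t2 - t1) * d) * Q := mul_le_mul_of_nonneg_right main hQpos.le
        _ = (t2 - t1) * d * Q := by ring
  have hdiv : ((A1 - A2) * p) / Q ≤ (t2 - t1) * d := (div_le_iff₀ hQpos).mpr goal2
  have he1 : A1 / Q * p = (A1 * p) / Q := by ring
  have he2 : A2 / Q * p = (A2 * p) / Q := by ring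
  have he3 : (A1 * p) / Q - (A2 * p) / Q = ((A1 - A2) * p) / Q := by ring
  linarith [hdiv, he3.le]

/-- Moving points of latitude `c` uniformly down towards the equator does not decrease
(i) the distance between two moved points of latitude `c`, nor
(ii) the distance from a moved point to a fixed point of latitude `≥ c`. -/
theorem stmt9 (n : ℕ) (hn : 2 ≤ n) (r c : ℝ) (hr : 0 < r) (hc0 : 0 < c) (hcr : c < r)
    (e : EuclideanSpace ℝ (Fin n)) (he : ‖e‖ = 1)
    (u v w : EuclideanSpace ℝ (Fin n))
    (hu : ‖u‖ = r) (huc : ⟪u, e⟫_ℝ = c)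
    (hv : ‖v‖ = r) (hvc : ⟪v, e⟫_ℝ = c)
    (hw : ‖w‖ = r) (hwc : c ≤ ⟪w, e⟫_ℝ) :
    AntitoneOn (fun t => ‖moveLat r c e u t - moveLat r c e v t‖) (Set.Icc 0 c) ∧
    AntitoneOn (fun t => ‖moveLat r c e u t - w‖) (Set.Icc 0 c) := by
  have hden : (0:ℝ) < r ^ 2 - c ^ 2 := by nlinarith
  have hee : ⟪e, e⟫_ℝ = 1 := by
    rw [real_inner_self_eq_norm_sq, he]; norm_num
  have part1 : AntitoneOn (fun t => ‖moveLat r c e u t - moveLat r c e v t‖) (Set.Icc 0 c) := by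
    intro t1 h1 t2 h2 h12
    have hdiff : ∀ t : ℝ, moveLat r c e u t - moveLat r c e v t =
        Real.sqrt ((r ^ 2 - t ^ 2) / (r ^ 2 - c ^ 2)) • (u - v) := by
      intro t; simp only [moveLat]; module
    simp only [hdiff, norm_smul, Real.norm_eq_abs,
      abs_of_nonneg (Real.sqrt_nonneg _)]
    apply mul_le_mul_of_nonneg_right _ (norm_nonneg _)
    apply Real.sqrt_le_sqrt
    apply (div_le_div_iff_of_pos_right hden).2
    nlinarith [h1.1, h12, h2.2]
  refine ⟨part1, ?_⟩
  set d : ℝ := ⟪e, w⟫_ℝ with hddef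
  set p : ℝ := ⟪u - c • e, w⟫_ℝ with hpdef
  have hcd : c ≤ d := by rwa [hddef, real_inner_comm]
  have hdr : d ≤ r := by
    calc d ≤ ‖e‖ * ‖w‖ := real_inner_le_norm e w
      _ = r := by rw [he, hw]; ring
  have hae : ⟪u - c • e, e⟫_ℝ = 0 := by
    rw [inner_sub_left, real_inner_smul_left, huc, hee]; ring
  have hna : ‖u - c • e‖ = Real.sqrt (r ^ 2 - c ^ 2) := by
    have h : ‖u - c • e‖ ^ 2 = r ^ 2 - c ^ 2 := by
      rw [norm_sub_sq_real, real_inner_smul_right, huc, norm_smul, hu, he,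
        Real.norm_eq_abs, abs_of_nonneg hc0.le]
      ring
    rw [← h, Real.sqrt_sq (norm_nonneg _)]
  have hnw : ‖w - d • e‖ = Real.sqrt (r ^ 2 - d ^ 2) := by
    have h : ‖w - d • e‖ ^ 2 = r ^ 2 - d ^ 2 := by
      rw [norm_sub_sq_real, real_inner_smul_right, real_inner_comm e w, ← hddef,
        norm_smul, hw, he, Real.norm_eq_abs, abs_of_nonneg (le_trans hc0.le hcd)]
      ring
    rw [← h, Real.sqrt_sq (norm_nonneg _)]
  have hp : p ≤ Real.sqrt (r ^ 2 - c ^ 2) * Real.sqrt (r ^ 2 - d ^ 2) := by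
    have h1 : p = ⟪u - c • e, w - d • e⟫_ℝ := by
      rw [hpdef, inner_sub_right, real_inner_smul_right, hae]; ring
    calc p = ⟪u - c • e, w - d • e⟫_ℝ := h1
      _ ≤ ‖u - c • e‖ * ‖w - d • e‖ := real_inner_le_norm _ _
      _ = Real.sqrt (r ^ 2 - c ^ 2) * Real.sqrt (r ^ 2 - d ^ 2) := by rw [hna, hnw]
  have hsq : ∀ t ∈ Set.Icc (0:ℝ) c, ‖moveLat r c e u t - w‖ ^ 2 =
      2 * r ^ 2 - 2 * (t * d + Real.sqrt ((r ^ 2 - t ^ 2) / (r ^ 2 - c ^ 2)) * p) := by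
    intro t ht
    have hs2 : Real.sqrt ((r ^ 2 - t ^ 2) / (r ^ 2 - c ^ 2)) ^ 2
        = (r ^ 2 - t ^ 2) / (r ^ 2 - c ^ 2) :=
      Real.sq_sqrt (div_nonneg (by nlinarith [ht.1, ht.2]) hden.le)
    have hnorm : ‖moveLat r c e u t‖ ^ 2 = r ^ 2 := by
      rw [moveLat, norm_add_sq_real, real_inner_smul_left, real_inner_smul_right,
        real_inner_comm (u - c • e) e, hae, norm_smul, norm_smul, he, hna,
        Real.norm_eq_abs, Real.norm_eq_abs]
      have h3 : Real.sqrt (r ^ 2 - c ^ 2) ^ 2 = r ^ 2 - c ^ 2 := Real.sq_sqrt hden.le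
      rw [mul_pow, mul_pow, sq_abs, sq_abs, h3, hs2]
      field_simp
      ring
    have hinner : ⟪moveLat r c e u t, w⟫_ℝ = t * d
        + Real.sqrt ((r ^ 2 - t ^ 2) / (r ^ 2 - c ^ 2)) * p := by
      rw [moveLat, inner_add_left, real_inner_smul_left, real_inner_smul_left]
    rw [norm_sub_sq_real, hnorm, hinner, hw]
    ring
  intro t1 h1 t2 h2 h12
  have hk := key9 r c d p t1 t2 hr hc0 hcr hcd hdr hp h1.1 h12 h2.2
  have hsqle : ‖moveLat r c e u t2 - w‖ ^ 2 ≤ ‖moveLat r c e u t1 - w‖ ^ 2 := by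
    rw [hsq t1 h1, hsq t2 h2]; linarith
  have hfin := Real.sqrt_le_sqrt hsqle
  rwa [Real.sqrt_sq (norm_nonneg _), Real.sqrt_sq (norm_nonneg _)] at hfin
end

section
/- Let ρ : [0,∞) → (0,∞) be a monotone decreasing positive function with ∫₀^{+∞} ρ(t) dt = +∞, and let μ_ρ be the measure on ℝⁿ with density ρ(‖x‖) with respect to Lebesgue measure. Then every unbounded convex subset S ⊆ ℝⁿ with nonempty interior satisfies μ_ρ(S) = +∞. In particular, every degenerate (unbounded) generalized simplex containing a ball has infinite μ_ρ-measure. -/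
open MeasureTheory Real
open scoped InnerProductSpace ENNReal

lemma stmt10_aux_sum (ρ : ℝ → ℝ) (hpos : ∀ t, 0 ≤ t → 0 < ρ t)
    (hmono : AntitoneOn ρ (Set.Ici 0))
    (hdiv : ∫⁻ t in Set.Ioi (0 : ℝ), ENNReal.ofReal (ρ t) = ⊤)
    (a r : ℝ) (ha : 0 ≤ a) (hr : 0 < r) :
    ∑' k : ℕ, ENNReal.ofReal (ρ (a + ((k : ℝ) + 1) * r)) = ⊤ := by
  by_contra hC
  set g : ℝ → ℝ≥0∞ := fun t => ENNReal.ofReal (ρ (max t 0)) with hg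
  set ν : Measure ℝ := volume.withDensity g with hν
  have hνIoi : ν (Set.Ioi (0:ℝ)) = ⊤ := by
    rw [hν, withDensity_apply _ measurableSet_Ioi, ← hdiv]
    apply setLIntegral_congr_fun measurableSet_Ioi
    intro t (ht : (0:ℝ) < t)
    simp [hg, max_eq_left ht.le]
  have hIoc : ∀ b c : ℝ, 0 ≤ b →
      ν (Set.Ioc b c) ≤ ENNReal.ofReal (ρ b) * ENNReal.ofReal (c - b) := by
    intro b c hb
    rw [hν, withDensity_apply _ measurableSet_Ioc]
    calc ∫⁻ t in Set.Ioc b c, g t ∂volume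
        ≤ ∫⁻ _ in Set.Ioc b c, ENNReal.ofReal (ρ b) ∂volume := by
          apply lintegral_mono_ae
          filter_upwards [ae_restrict_mem measurableSet_Ioc] with t ht
          have ht0 : (0:ℝ) ≤ t := le_trans hb ht.1.le
          have : ρ t ≤ ρ b := hmono hb ht0 ht.1.le
          simp only [hg, max_eq_left ht0]
          exact ENNReal.ofReal_le_ofReal this
      _ = ENNReal.ofReal (ρ b) * ENNReal.ofReal (c - b) := by
          rw [setLIntegral_const, Real.volume_Ioc]
  have hcover : Set.Ioi (0:ℝ) ⊆ Set.Ioc 0 (a+r) ∪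
      ⋃ k : ℕ, Set.Ioc (a + ((k:ℝ)+1)*r) (a + ((k:ℝ)+2)*r) := by
    intro t ht
    by_cases h : t ≤ a + r
    · exact Or.inl ⟨ht, h⟩
    · push_neg at h
      have hex : ∃ m : ℕ, t ≤ a + ((m:ℝ)+2)*r := by
        obtain ⟨m, hm⟩ := exists_nat_gt ((t - a)/r)
        refine ⟨m, ?_⟩
        rw [div_lt_iff₀ hr] at hm
        nlinarith
      right
      have hm2 := Nat.find_spec hex
      refine Set.mem_iUnion.2 ⟨Nat.find hex, ⟨?_, hm2⟩⟩
      rcases Nat.eq_zero_or_pos (Nat.find hex) with h0 | hp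
      · rw [h0]; push_cast; linarith
      · have hmin : ¬ t ≤ a + (((Nat.find hex - 1 : ℕ) : ℝ) + 2) * r :=
          Nat.find_min hex (Nat.sub_lt hp one_pos)
        push_neg at hmin
        have hcast : ((Nat.find hex - 1 : ℕ) : ℝ) = (Nat.find hex : ℝ) - 1 := by
          have := Nat.cast_sub (R := ℝ) hp
          simpa using this
        rw [hcast] at hmin
        linarith
  have h1 : ν (Set.Ioi (0:ℝ)) ≤ ν (Set.Ioc 0 (a+r)) +
      ∑' k : ℕ, ν (Set.Ioc (a + ((k:ℝ)+1)*r) (a + ((k:ℝ)+2)*r)) := by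
    refine le_trans (measure_mono hcover) (le_trans (measure_union_le _ _) ?_)
    exact add_le_add le_rfl (measure_iUnion_le _)
  have h2 : ν (Set.Ioc (0:ℝ) (a+r)) < ⊤ :=
    lt_of_le_of_lt (hIoc 0 (a+r) le_rfl)
      (ENNReal.mul_lt_top ENNReal.ofReal_lt_top ENNReal.ofReal_lt_top)
  have h3 : ∑' k : ℕ, ν (Set.Ioc (a + ((k:ℝ)+1)*r) (a + ((k:ℝ)+2)*r)) ≤
      (∑' k : ℕ, ENNReal.ofReal (ρ (a + ((k:ℝ)+1)*r))) * ENNReal.ofReal r := by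
    rw [← ENNReal.tsum_mul_right]
    refine ENNReal.tsum_le_tsum fun k => ?_
    have hb0 : (0:ℝ) ≤ a + ((k:ℝ)+1)*r := by
      have : (0:ℝ) ≤ ((k:ℝ)+1)*r := by positivity
      linarith
    have := hIoc (a + ((k:ℝ)+1)*r) (a + ((k:ℝ)+2)*r) hb0
    have heq : a + ((k:ℝ)+2)*r - (a + ((k:ℝ)+1)*r) = r := by ring
    rwa [heq] at this
  have h4 : (∑' k : ℕ, ENNReal.ofReal (ρ (a + ((k:ℝ)+1)*r))) * ENNReal.ofReal r < ⊤ :=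
    ENNReal.mul_lt_top (lt_top_iff_ne_top.2 hC) ENNReal.ofReal_lt_top
  have : ν (Set.Ioi (0:ℝ)) < ⊤ := lt_of_le_of_lt h1
    (lt_of_le_of_lt (add_le_add le_rfl h3) (ENNReal.add_lt_top.2 ⟨h2, h4⟩))
  rw [hνIoi] at this
  exact (lt_irrefl _ this)

/-- If `ρ` is a positive nonincreasing radial density with divergent integral
`∫₀^∞ ρ = ∞`, then every unbounded convex set with nonempty interior has infinite
measure with respect to the measure with density `ρ(‖x‖)`. -/
theorem stmt10 (n : ℕ) (ρ : ℝ → ℝ)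
    (hpos : ∀ t, 0 ≤ t → 0 < ρ t)
    (hmono : AntitoneOn ρ (Set.Ici 0))
    (hdiv : ∫⁻ t in Set.Ioi (0 : ℝ), ENNReal.ofReal (ρ t) = ⊤)
    (S : Set (EuclideanSpace ℝ (Fin n))) (hconv : Convex ℝ S)
    (hunb : ¬Bornology.IsBounded S) (hint : (interior S).Nonempty) :
    (volume.withDensity fun x : EuclideanSpace ℝ (Fin n) => ENNReal.ofReal (ρ ‖x‖)) S = ⊤ := by
  obtain ⟨x₀, hx₀⟩ := hint
  obtain ⟨r, hr, hball⟩ := Metric.isOpen_iff.1 isOpen_interior x₀ hx₀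
  have hballS : Metric.ball x₀ r ⊆ S := hball.trans interior_subset
  have hfar : ∀ R : ℝ, ∃ y ∈ S, R < ‖y - x₀‖ := by
    intro R
    rw [isBounded_iff_forall_norm_le] at hunb
    push_neg at hunb
    obtain ⟨y, hyS, hy⟩ := hunb (R + ‖x₀‖)
    refine ⟨y, hyS, ?_⟩
    have h := norm_sub_norm_le y x₀
    linarith
  have hkey : ∀ k : ℕ, ∃ cc : EuclideanSpace ℝ (Fin n),
      ‖cc - x₀‖ = (k:ℝ) * r + r/2 ∧ Metric.ball cc (r/2) ⊆ S := by
    intro k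
    set d : ℝ := (k:ℝ) * r + r/2 with hd
    have hd0 : 0 < d := by
      have : (0:ℝ) ≤ (k:ℝ) * r := mul_nonneg (Nat.cast_nonneg k) hr.le
      rw [hd]; linarith
    obtain ⟨y, hyS, hy⟩ := hfar (2*d)
    set D := ‖y - x₀‖ with hD
    have hDpos : 0 < D := by linarith
    set lam := d / D with hlam
    have hlam0 : 0 < lam := div_pos hd0 hDpos
    clear_value d D lam
    have hlam2 : lam < 1/2 := by
      rw [hlam, div_lt_iff₀ hDpos]; linarith
    have h1lam : 0 < 1 - lam := by linarith
    refine ⟨x₀ + lam • (y - x₀), ?_, ?_⟩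
    · rw [add_sub_cancel_left, norm_smul, Real.norm_eq_abs, abs_of_pos hlam0, ← hD,
        hlam]
      exact div_mul_cancel₀ d hDpos.ne'
    · intro z hz
      rw [Metric.mem_ball, dist_eq_norm] at hz
      set w := (1 - lam)⁻¹ • (z - lam • y) with hw
      have hzw : z = (1 - lam) • w + lam • y := by
        rw [hw, smul_inv_smul₀ h1lam.ne']; abel
      have hscaled : (1 - lam) • (w - x₀) = z - (x₀ + lam • (y - x₀)) := by
        rw [hw, smul_sub, smul_inv_smul₀ h1lam.ne']
        module
      have hnorm : (1 - lam) * ‖w - x₀‖ < r/2 := by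
        have : ‖(1 - lam) • (w - x₀)‖ < r/2 := by rw [hscaled]; exact hz
        rwa [norm_smul, Real.norm_eq_abs, abs_of_pos h1lam] at this
      have hwball : w ∈ Metric.ball x₀ r := by
        rw [Metric.mem_ball, dist_eq_norm]
        have hnn := norm_nonneg (w - x₀)
        nlinarith
      have hwS : w ∈ S := hballS hwball
      rw [hzw]
      exact hconv hwS hyS h1lam.le hlam0.le (by ring)
  choose c hc hcball using hkey
  set B : ℕ → Set (EuclideanSpace ℝ (Fin n)) := fun k => Metric.ball (c k) (r/2) with hB
  have hBnorm : ∀ k : ℕ, ∀ x ∈ B k,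
      (k:ℝ) * r < ‖x - x₀‖ ∧ ‖x - x₀‖ < ((k:ℝ)+1) * r := by
    intro k x hx
    rw [hB] at hx
    simp only [Metric.mem_ball, dist_eq_norm] at hx
    have h1 := hc k
    have ht1 : ‖x - x₀‖ ≤ ‖x - c k‖ + ‖c k - x₀‖ := by
      have := norm_add_le (x - c k) (c k - x₀)
      simpa using this
    have ht2 : ‖c k - x₀‖ ≤ ‖c k - x‖ + ‖x - x₀‖ := by
      have := norm_add_le (c k - x) (x - x₀)
      simpa using this
    rw [norm_sub_rev (c k) x] at ht2
    constructor <;> [nlinarith; nlinarith]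
  have hdisj : Pairwise (Function.onFun Disjoint B) := by
    intro j k hjk
    refine Set.disjoint_left.2 fun x hxj hxk => ?_
    obtain ⟨hj1, hj2⟩ := hBnorm j x hxj
    obtain ⟨hk1, hk2⟩ := hBnorm k x hxk
    rcases lt_or_gt_of_ne hjk with h | h
    · have hcast : (j:ℝ) + 1 ≤ (k:ℝ) := by exact_mod_cast h
      nlinarith
    · have hcast : (k:ℝ) + 1 ≤ (j:ℝ) := by exact_mod_cast h
      nlinarith
  have hmeasB : ∀ k : ℕ, MeasurableSet (B k) := fun k => measurableSet_ball
  set μ : Measure (EuclideanSpace ℝ (Fin n)) :=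
    volume.withDensity fun x => ENNReal.ofReal (ρ ‖x‖) with hμ
  set V : ℝ≥0∞ := volume (Metric.ball (0 : EuclideanSpace ℝ (Fin n)) (r/2)) with hV
  have hBm : ∀ k : ℕ,
      ENNReal.ofReal (ρ (‖x₀‖ + ((k:ℝ)+1)*r)) * V ≤ μ (B k) := by
    intro k
    rw [hμ, withDensity_apply _ (hmeasB k)]
    have hvol : V = volume (B k) := by
      show volume (Metric.ball (0 : EuclideanSpace ℝ (Fin n)) (r/2)) =
        volume (Metric.ball (c k) (r/2))
      exact (Measure.addHaar_ball_center volume (c k) (r/2)).symm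
    calc ENNReal.ofReal (ρ (‖x₀‖ + ((k:ℝ)+1)*r)) * V
        = ∫⁻ _ in B k, ENNReal.ofReal (ρ (‖x₀‖ + ((k:ℝ)+1)*r)) ∂volume := by
          rw [setLIntegral_const, hvol]
      _ ≤ ∫⁻ x in B k, ENNReal.ofReal (ρ ‖x‖) ∂volume := by
          apply lintegral_mono_ae
          filter_upwards [ae_restrict_mem (hmeasB k)] with x hx
          have hb := (hBnorm k x hx).2
          have hxle : ‖x‖ ≤ ‖x₀‖ + ((k:ℝ)+1)*r := by
            have := norm_sub_norm_le x x₀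
            linarith
          have hnn : (0:ℝ) ≤ ‖x₀‖ + ((k:ℝ)+1)*r := le_trans (norm_nonneg x) hxle
          exact ENNReal.ofReal_le_ofReal (hmono (norm_nonneg x) hnn hxle)
  have hU : μ (⋃ k, B k) = ∑' k, μ (B k) := measure_iUnion hdisj hmeasB
  have hle : (∑' k : ℕ, ENNReal.ofReal (ρ (‖x₀‖ + ((k:ℝ)+1)*r)) * V) ≤ μ S := by
    calc (∑' k : ℕ, ENNReal.ofReal (ρ (‖x₀‖ + ((k:ℝ)+1)*r)) * V)
        ≤ ∑' k, μ (B k) := ENNReal.tsum_le_tsum hBm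
      _ = μ (⋃ k, B k) := hU.symm
      _ ≤ μ S := measure_mono (Set.iUnion_subset fun k => hcball k)
  have hsum : ∑' k : ℕ, ENNReal.ofReal (ρ (‖x₀‖ + ((k:ℝ)+1)*r)) = ⊤ :=
    stmt10_aux_sum ρ hpos hmono hdiv ‖x₀‖ r (norm_nonneg _) hr
  have hV0 : V ≠ 0 := (Metric.measure_ball_pos volume 0 (by linarith)).ne'
  rw [ENNReal.tsum_mul_right, hsum, ENNReal.top_mul hV0] at hle
  exact top_le_iff.1 hle
end
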